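/- arXiv:2512.06124 — 2 statements merged into one kernel-verified Lean document; each statement's English description precedes it below -/
import Mathlib

section
/- Let κ ∈ ℝ and let L0 : ℝ → ℝ be of class C¹, even, positive, and nondecreasing in |d|. For d ∈ ℝ with dκ ≥ 0, define Φ(d) = ∫₀^d g(ξ)/L1(ξ,κ)² dξ, where g(ξ) = ξ + (1+ξκ)L0(ξ)L0'(ξ) + (κ/2)L0(ξ)² and L1(ξ,κ)² = ξ² + L0(ξ)²(1+ξκ). Then Φ(d) ≥ 0, and Φ(d) = 0 if and only if d = 0. -/
/-- For a `C¹`, even, positive look-ahead profile `L0` nondecreasing in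
`|d|`, the Lyapunov potential `Φ(d) = ∫₀^d g(ξ)/L1(ξ,κ)² dξ` is nonnegative on the set
`{d : dκ ≥ 0}`, vanishing exactly at `d = 0`. -/
theorem stmt_8 (κ : ℝ) (L0 : ℝ → ℝ) (hC1 : ContDiff ℝ 1 L0)
    (heven : ∀ x, L0 (-x) = L0 x) (hpos : ∀ x, 0 < L0 x)
    (hmono : MonotoneOn L0 (Set.Ici (0 : ℝ)))
    (d : ℝ) (hdκ : d * κ ≥ 0) :
    let g : ℝ → ℝ := fun x => x + (1 + x * κ) * L0 x * deriv L0 x + κ / 2 * (L0 x) ^ 2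
    let L1sq : ℝ → ℝ := fun x => x ^ 2 + (L0 x) ^ 2 * (1 + x * κ)
    let Φ : ℝ → ℝ := fun x => ∫ ξ in (0 : ℝ)..x, g ξ / L1sq ξ
    Φ d ≥ 0 ∧ (Φ d = 0 ↔ d = 0) := by
  intro g L1sq Φ
  have hL0diff : Differentiable ℝ L0 := hC1.differentiable one_ne_zero
  have hcontL0' : Continuous (deriv L0) := hC1.continuous_deriv le_rfl
  -- sign of x * κ on the interval
  have hsign : ∀ x ∈ Set.uIcc (0 : ℝ) d, 0 ≤ x * κ := by
    intro x hx
    rcases lt_trichotomy d 0 with hd | hd | hd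
    · have hκ : κ ≤ 0 := by nlinarith
      have hx0 : x ≤ 0 := by
        rw [Set.uIcc_of_ge hd.le] at hx; exact hx.2
      nlinarith
    · subst hd; simp at hx; simp [hx]
    · have hκ : 0 ≤ κ := by nlinarith
      have hx0 : 0 ≤ x := by
        rw [Set.uIcc_of_le hd.le] at hx; exact hx.1
      exact mul_nonneg hx0 hκ
  have hLpos : ∀ x ∈ Set.uIcc (0 : ℝ) d, 0 < L1sq x := by
    intro x hx
    have := hsign x hx
    have := hpos x
    simp only [L1sq]
    nlinarith [sq_nonneg x, sq_nonneg (L0 x)]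
  -- derivative of ½ log L1sq
  have hderiv : ∀ x ∈ Set.uIcc (0 : ℝ) d,
      HasDerivAt (fun y => Real.log (L1sq y) / 2) (g x / L1sq x) x := by
    intro x hx
    have hne : L1sq x ≠ 0 := (hLpos x hx).ne'
    have hL0 : HasDerivAt L0 (deriv L0 x) x := (hL0diff x).hasDerivAt
    have hsq : HasDerivAt (fun y => (L0 y) ^ 2) (2 * L0 x * deriv L0 x) x := by
      have := hL0.fun_pow 2
      simpa [mul_comm, mul_assoc, mul_left_comm] using this
    have hlin : HasDerivAt (fun y => 1 + y * κ) κ x := by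
      simpa using ((hasDerivAt_id x).mul_const κ).const_add 1
    have hmul : HasDerivAt (fun y => (L0 y) ^ 2 * (1 + y * κ))
        (2 * L0 x * deriv L0 x * (1 + x * κ) + (L0 x) ^ 2 * κ) x := hsq.mul hlin
    have hpow : HasDerivAt (fun y : ℝ => y ^ 2) (2 * x) x := by
      simpa using hasDerivAt_pow 2 x
    have h1 : HasDerivAt L1sq (2 * g x) x := by
      have := hpow.fun_add hmul
      exact this.congr_deriv (by simp only [g]; ring)
    have hlog : HasDerivAt (fun y => Real.log (L1sq y)) (2 * g x / L1sq x) x :=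
      h1.log hne
    have := hlog.div_const 2
    exact this.congr_deriv (by field_simp)
  -- integrability
  have hcont : ContinuousOn (fun x => g x / L1sq x) (Set.uIcc (0 : ℝ) d) := by
    apply ContinuousOn.div
    · exact (Continuous.continuousOn (by fun_prop))
    · exact (Continuous.continuousOn (by fun_prop))
    · exact fun x hx => (hLpos x hx).ne'
  have hint : IntervalIntegrable (fun x => g x / L1sq x) MeasureTheory.volume 0 d :=
    hcont.intervalIntegrable
  have hΦ : Φ d = Real.log (L1sq d) / 2 - Real.log (L1sq 0) / 2 :=
    intervalIntegral.integral_eq_sub_of_hasDerivAt hderiv hint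
  have h0mem : (0 : ℝ) ∈ Set.uIcc (0 : ℝ) d := Set.left_mem_uIcc
  have hdmem : d ∈ Set.uIcc (0 : ℝ) d := Set.right_mem_uIcc
  have hpos0 : 0 < L1sq 0 := hLpos 0 h0mem
  have hposd : 0 < L1sq d := hLpos d hdmem
  have hL0d : L0 0 ≤ L0 d := by
    rcases le_or_gt 0 d with hd | hd
    · exact hmono Set.self_mem_Ici hd hd
    · have : L0 0 ≤ L0 (-d) := hmono Set.self_mem_Ici (by linarith : (0:ℝ) ≤ -d) (by linarith)
      rwa [heven d] at this
  have hL1le : L1sq 0 ≤ L1sq d := by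
    simp only [L1sq]
    nlinarith [sq_nonneg d, hpos d, hpos 0]
  have hloge : Real.log (L1sq 0) ≤ Real.log (L1sq d) :=
    Real.log_le_log hpos0 hL1le
  constructor
  · rw [hΦ]; linarith
  · constructor
    · intro hΦ0
      by_contra hd0
      have hd2 : 0 < d ^ 2 := by positivity
      have hlt : L1sq 0 < L1sq d := by
        simp only [L1sq]
        nlinarith [hpos d, hpos 0]
      have : Real.log (L1sq 0) < Real.log (L1sq d) := Real.log_lt_log hpos0 hlt
      rw [hΦ] at hΦ0; linarith
    · intro h; subst h
      simp only [Φ, intervalIntegral.integral_same]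
end

section
/- (Positive definiteness of the Lyapunov function) Let V > 0, let κ ∈ ℝ, and let L0 : ℝ → ℝ be C¹, even, positive, and nondecreasing in |d|. For d with dκ ≥ 0, define Φ(d) = ∫₀^d g(ξ)/L1(ξ,κ)² dξ with g(ξ) = ξ + (1+ξκ)L0(ξ)L0'(ξ) + (κ/2)L0(ξ)² and L1(ξ,κ)² = ξ² + L0(ξ)²(1+ξκ), and define 𝒱(d,η) = (1/2)V² sin²η + V² Φ(d). Then 𝒱(d,η) ≥ 0 for all such d and all η ∈ ℝ, and for η ∈ (−π, π), 𝒱(d,η) = 0 if and only if d = 0 and η = 0. -/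
/-- **Positive definiteness of the Lyapunov function.** With
`Φ(d) = ∫₀^d g(ξ)/L1(ξ,κ)² dξ` and `𝒱(d,η) = (1/2)V² sin²η + V² Φ(d)`, one has
`𝒱(d,η) ≥ 0` for all `d` with `dκ ≥ 0` and all `η`, and for `η ∈ (−π,π)`,
`𝒱(d,η) = 0` iff `d = 0` and `η = 0`. -/
theorem stmt_9 (V κ : ℝ) (hV : 0 < V) (L0 : ℝ → ℝ) (hC1 : ContDiff ℝ 1 L0)
    (heven : ∀ x, L0 (-x) = L0 x) (hpos : ∀ x, 0 < L0 x)
    (hmono : MonotoneOn L0 (Set.Ici (0 : ℝ))) :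
    let g : ℝ → ℝ := fun x => x + (1 + x * κ) * L0 x * deriv L0 x + κ / 2 * (L0 x) ^ 2
    let L1sq : ℝ → ℝ := fun x => x ^ 2 + (L0 x) ^ 2 * (1 + x * κ)
    let Φ : ℝ → ℝ := fun x => ∫ ξ in (0 : ℝ)..x, g ξ / L1sq ξ
    let 𝒱 : ℝ → ℝ → ℝ := fun d η => (1 / 2) * V ^ 2 * (Real.sin η) ^ 2 + V ^ 2 * Φ d
    (∀ d : ℝ, d * κ ≥ 0 → ∀ η : ℝ, 𝒱 d η ≥ 0) ∧
      (∀ d : ℝ, d * κ ≥ 0 → ∀ η : ℝ, η ∈ Set.Ioo (-Real.pi) Real.pi →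
        (𝒱 d η = 0 ↔ d = 0 ∧ η = 0)) := by
  intro g L1sq Φ 𝒱
  have hdiff : Differentiable ℝ L0 := hC1.differentiable one_ne_zero
  have hcontL0 : Continuous L0 := hdiff.continuous
  have hcontd : Continuous (deriv L0) := hC1.continuous_deriv le_rfl
  -- L0 0 ≤ L0 x for all x
  have hL0ge : ∀ x, L0 0 ≤ L0 x := by
    intro x
    rcases le_total 0 x with hx | hx
    · exact hmono (by simp) (by simpa using hx) hx
    · rw [← heven x]
      exact hmono (by simp) (by simp [Set.mem_Ici]; linarith) (by linarith)
  -- sign of ξ * κ on the interval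
  have hsign : ∀ d : ℝ, d * κ ≥ 0 → ∀ ξ ∈ Set.uIcc (0 : ℝ) d, ξ * κ ≥ 0 := by
    intro d hd ξ hξ
    rcases le_total 0 d with hd0 | hd0
    · rw [Set.uIcc_of_le hd0] at hξ
      obtain ⟨h1, h2⟩ := hξ
      rcases lt_or_eq_of_le h1 with h1 | h1
      · have hκ : 0 ≤ κ := by
          by_contra hκ
          push_neg at hκ
          nlinarith
        exact mul_nonneg h1.le hκ
      · simp [← h1]
    · rw [Set.uIcc_of_ge hd0] at hξ
      obtain ⟨h1, h2⟩ := hξ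
      rcases lt_or_eq_of_le h2 with h2 | h2
      · have hκ : κ ≤ 0 := by
          by_contra hκ
          push_neg at hκ
          nlinarith
        nlinarith
      · simp [h2]
  -- positivity of L1sq
  have hL1pos : ∀ ξ : ℝ, ξ * κ ≥ 0 → 0 < L1sq ξ := by
    intro ξ hξ
    have := hpos ξ
    simp only [L1sq]
    nlinarith [sq_nonneg ξ]
  -- closed form for Φ
  have key : ∀ d : ℝ, d * κ ≥ 0 →
      Φ d = 1 / 2 * Real.log (L1sq d) - 1 / 2 * Real.log (L1sq 0) := by
    intro d hd
    have hmem0 : (0:ℝ) ∈ Set.uIcc (0:ℝ) d := Set.left_mem_uIcc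
    have hmemd : d ∈ Set.uIcc (0:ℝ) d := Set.right_mem_uIcc
    have hL1ne : ∀ ξ ∈ Set.uIcc (0:ℝ) d, L1sq ξ ≠ 0 := fun ξ hξ =>
      (hL1pos ξ (hsign d hd ξ hξ)).ne'
    have hcontL1 : Continuous L1sq :=
      (continuous_pow 2).add ((hcontL0.pow 2).mul (continuous_const.add (continuous_id.mul continuous_const)))
    have hcontg : Continuous g :=
      (continuous_id.add
        (((continuous_const.add (continuous_id.mul continuous_const)).mul hcontL0).mul hcontd)).add
        (continuous_const.mul (hcontL0.pow 2))
    have hderiv : ∀ ξ ∈ Set.uIcc (0:ℝ) d,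
        HasDerivAt (fun x => 1 / 2 * Real.log (L1sq x)) (g ξ / L1sq ξ) ξ := by
      intro ξ hξ
      have hL0d : HasDerivAt L0 (deriv L0 ξ) ξ := (hdiff ξ).hasDerivAt
      have h1 : HasDerivAt (fun x : ℝ => 1 + x * κ) κ ξ := by
        simpa using ((hasDerivAt_id ξ).mul_const κ).const_add 1
      have hL1d : HasDerivAt L1sq
          (2 * ξ + (2 * L0 ξ ^ 1 * deriv L0 ξ * (1 + ξ * κ) + L0 ξ ^ 2 * κ)) ξ := by
        have := (hasDerivAt_pow 2 ξ).add ((hL0d.pow 2).mul h1)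
        simp at this
        simp only [pow_one]
        exact this
      have hlog : HasDerivAt (fun x => Real.log (L1sq x))
          ((2 * ξ + (2 * L0 ξ ^ 1 * deriv L0 ξ * (1 + ξ * κ) + L0 ξ ^ 2 * κ)) / L1sq ξ) ξ :=
        hL1d.log (hL1ne ξ hξ)
      have := hlog.const_mul (1 / 2 : ℝ)
      refine this.congr_deriv ?_
      have hne := hL1ne ξ hξ
      show _ = (ξ + (1 + ξ * κ) * L0 ξ * deriv L0 ξ + κ / 2 * L0 ξ ^ 2) / L1sq ξ
      rw [mul_div_assoc']
      congr 1
      ring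
    have hint : IntervalIntegrable (fun ξ => g ξ / L1sq ξ) MeasureTheory.volume 0 d :=
      (hcontg.continuousOn.div hcontL1.continuousOn hL1ne).intervalIntegrable
    have := intervalIntegral.integral_eq_sub_of_hasDerivAt hderiv hint
    simpa [Φ] using this
  have hL1sq0 : L1sq 0 = L0 0 ^ 2 := by simp [L1sq]
  have hL1le : ∀ d : ℝ, d * κ ≥ 0 → L1sq 0 ≤ L1sq d := by
    intro d hd
    have h1 := hL0ge d
    have h2 := hpos 0
    have h3 := hpos d
    simp only [L1sq]
    nlinarith [sq_nonneg d]
  have hΦnonneg : ∀ d : ℝ, d * κ ≥ 0 → 0 ≤ Φ d := by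
    intro d hd
    rw [key d hd]
    have := Real.log_le_log (hL1pos 0 (by simp)) (hL1le d hd)
    linarith
  have hΦzero : ∀ d : ℝ, d * κ ≥ 0 → Φ d = 0 → d = 0 := by
    intro d hd hΦ
    rw [key d hd] at hΦ
    have hlogeq : Real.log (L1sq d) = Real.log (L1sq 0) := by linarith
    have heq : L1sq d = L1sq 0 :=
      Real.log_injOn_pos (Set.mem_Ioi.mpr (hL1pos d hd))
        (Set.mem_Ioi.mpr (hL1pos 0 (by simp))) hlogeq
    have h1 := hL0ge d
    have h2 := hpos 0
    have h3 := hpos d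
    simp only [L1sq] at heq
    nlinarith [sq_nonneg d]
  have hΦ0 : Φ 0 = 0 := by simp [Φ]
  constructor
  · intro d hd η
    have h1 : 0 ≤ (Real.sin η) ^ 2 := sq_nonneg _
    have h2 := hΦnonneg d hd
    have hV2 : 0 < V ^ 2 := by positivity
    simp only [𝒱]
    nlinarith
  · intro d hd η hη
    constructor
    · intro h0
      have h1 : 0 ≤ (1 / 2) * V ^ 2 * (Real.sin η) ^ 2 := by positivity
      have h2 : 0 ≤ V ^ 2 * Φ d := by
        have := hΦnonneg d hd
        positivity
      simp only [𝒱] at h0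
      have hs : (1 / 2) * V ^ 2 * (Real.sin η) ^ 2 = 0 := by linarith
      have hp : V ^ 2 * Φ d = 0 := by linarith
      have hV2 : (V:ℝ) ^ 2 ≠ 0 := by positivity
      have hsin : Real.sin η = 0 := by
        have : (Real.sin η) ^ 2 = 0 := by
          field_simp at hs
          rw [mul_zero] at hs
          exact (mul_eq_zero.mp hs).resolve_left hV2
        exact pow_eq_zero_iff (by norm_num) |>.mp this
      have hΦd : Φ d = 0 := by
        rcases mul_eq_zero.mp hp with h | h
        · exact absurd h hV2
        · exact h
      refine ⟨hΦzero d hd hΦd, ?_⟩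
      exact (Real.sin_eq_zero_iff_of_lt_of_lt hη.1 hη.2).mp hsin
    · rintro ⟨rfl, rfl⟩
      simp [𝒱, hΦ0]
end
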